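/- A graph G is k-connected if and only if G has at least k+1 vertices and for every vertex x and every vertex set U with |U| ≥ k and x ∉ U, there exists an (x, U)-fan of size k. -/

import Mathlib

open SimpleGraph

/-- `T` is a pendant `S`-Steiner tree in `G`: a subtree of `G` containing `S` in which
every vertex of `S` has degree exactly one. -/
def IsPendantSteinerTree {V : Type*} (G : SimpleGraph V) (S : Set V) (T : G.Subgraph) : Prop :=
  T.coe.IsTree ∧ S ⊆ T.verts ∧ ∀ v ∈ S, (T.neighborSet v).ncard = 1

/-- Two (pendant) `S`-Steiner trees are internally disjoint: edge-disjoint with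
vertex intersection exactly `S`. -/
def InternallyDisjoint {V : Type*} (G : SimpleGraph V) (S : Set V) (T T' : G.Subgraph) : Prop :=
  T.edgeSet ∩ T'.edgeSet = ∅ ∧ T.verts ∩ T'.verts = S

/-- There exist `ℓ` pairwise internally disjoint pendant `S`-Steiner trees in `G`. -/
def HasPendantTrees {V : Type*} (G : SimpleGraph V) (S : Set V) (ℓ : ℕ) : Prop :=
  ∃ T : Fin ℓ → G.Subgraph, (∀ i, IsPendantSteinerTree G S (T i)) ∧
    ∀ i j, i ≠ j → InternallyDisjoint G S (T i) (T j)

/-- The pendant tree `k`-connectivity `τ_k(G)`: the largest `ℓ` such that every `k`-set of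
vertices admits `ℓ` pairwise internally disjoint pendant Steiner trees. -/
noncomputable def pendantConn {V : Type*} (G : SimpleGraph V) (k : ℕ) : ℕ :=
  sSup {ℓ | ∀ S : Finset V, S.card = k → HasPendantTrees G (↑S) ℓ}

/-- The minimum degree of a graph, via neighbour sets. -/
noncomputable def minDeg {V : Type*} (G : SimpleGraph V) : ℕ :=
  sInf (Set.range fun v => (G.neighborSet v).ncard)

/-- `G` is `k`-connected. -/
def IsKConnected {V : Type*} [Fintype V] (G : SimpleGraph V) (k : ℕ) : Prop :=
  k < Fintype.card V ∧
    ∀ U : Finset V, U.card < k → (G.induce ((↑U : Set V)ᶜ)).Connected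

/-- The vertex connectivity `κ(G)`. -/
noncomputable def vertexConn {V : Type*} [Fintype V] (G : SimpleGraph V) : ℕ :=
  sSup {k | IsKConnected G k}

/-- An `(x, U)`-fan of size `k`: `k` paths from `x` to `U`, any two sharing only `x`,
each meeting `U` only in its endpoint. -/
def IsFan {V : Type*} (G : SimpleGraph V) (x : V) (U : Set V) (k : ℕ)
    (t : Fin k → V) (P : ∀ i, G.Walk x (t i)) : Prop :=
  (∀ i, t i ∈ U) ∧ (∀ i, (P i).IsPath) ∧
  (∀ i, ∀ v ∈ (P i).support, v ∈ U → v = t i) ∧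
  (∀ i j, i ≠ j → ∀ v, v ∈ (P i).support → v ∈ (P j).support → v = x)


namespace MengerAux

variable {V : Type*} {G : SimpleGraph V}

/-- `T` is an `A`-`B` cut: every walk from `A` to `B` meets `T`. -/
def Cut (G : SimpleGraph V) (A B T : Set V) : Prop :=
  ∀ ⦃a⦄, a ∈ A → ∀ ⦃b⦄, b ∈ B → ∀ p : G.Walk a b, ∃ t ∈ T, t ∈ p.support

lemma Cut.symm {A B T : Set V} (h : Cut G A B T) : Cut G B A T := by
  intro b hb a ha p
  obtain ⟨t, ht, hts⟩ := h ha hb p.reverse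
  exact ⟨t, ht, by simpa using hts⟩

structure ABPath (G : SimpleGraph V) (A B : Set V) where
  first : V
  last : V
  walk : G.Walk first last
  isPath : walk.IsPath
  firstMem : first ∈ A
  lastMem : last ∈ B
  meetA : ∀ x ∈ walk.support, x ∈ A → x = first
  meetB : ∀ x ∈ walk.support, x ∈ B → x = last

lemma append_isPath {a b c : V} {p : G.Walk a b} {q : G.Walk b c}
    (hp : p.IsPath) (hq : q.IsPath)
    (h : ∀ w ∈ p.support, w ∈ q.support → w = b) : (p.append q).IsPath := by
  rw [Walk.isPath_def] at hp hq ⊢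
  rw [Walk.support_append, List.nodup_append]
  have hbq : b ∉ q.support.tail := by
    have := q.support_eq_cons ▸ hq
    exact (List.nodup_cons.mp this).1
  have hqt : q.support.tail.Nodup := hq.sublist (List.tail_sublist _)
  refine ⟨hp, hqt, ?_⟩
  intro w hwp w' hwq hww'
  subst hww'
  have hw : w ∈ q.support := List.mem_of_mem_tail hwq
  exact hbq ((h w hwp hw) ▸ hwq)


set_option linter.unusedSectionVars false

variable [DecidableEq V]

lemma mem_takeUntil_end {a b w : V} {p : G.Walk a b} (hp : p.IsPath)
    (h : w ∈ p.support) (hb : b ∈ (p.takeUntil w h).support) : w = b := by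
  by_contra hne
  have hspec := p.take_spec h
  have hnd : p.support.Nodup := hp.support_nodup
  rw [← hspec, Walk.support_append, List.nodup_append] at hnd
  have hbd : b ∈ (p.dropUntil w h).support := Walk.end_mem_support _
  have : b ∈ (p.dropUntil w h).support.tail := by
    have := (p.dropUntil w h).support_eq_cons
    rw [this] at hbd
    rcases List.mem_cons.mp hbd with rfl | ht
    · exact absurd rfl hne
    · exact ht
  exact hnd.2.2 b hb b this rfl

lemma mem_dropUntil_start {a b w : V} {p : G.Walk a b} (hp : p.IsPath)
    (h : w ∈ p.support) (ha : a ∈ (p.dropUntil w h).support) : w = a := by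
  by_contra hne
  have hspec := p.take_spec h
  have hnd : p.support.Nodup := hp.support_nodup
  rw [← hspec, Walk.support_append, List.nodup_append] at hnd
  have hat : a ∈ (p.dropUntil w h).support.tail := by
    have := (p.dropUntil w h).support_eq_cons
    rw [this] at ha
    rcases List.mem_cons.mp ha with rfl | ht
    · exact absurd rfl hne
    · exact ht
  exact hnd.2.2 a (Walk.start_mem_support _) a hat rfl

lemma exists_decomp {a b : V} {p : G.Walk a b} (hp : p.IsPath) {e : Sym2 V}
    (he : e ∈ p.edges) :
    ∃ (u v : V) (p₁ : G.Walk a u) (p₂ : G.Walk v b), e = s(u, v) ∧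
      e ∉ p₁.edges ∧ e ∉ p₂.edges ∧
      (∀ w ∈ p₁.support, w ∈ p.support) ∧ (∀ w ∈ p₂.support, w ∈ p.support) := by
  induction p with
  | nil => simp at he
  | cons hadj q ih =>
    rename_i x y z
    rw [Walk.edges_cons, List.mem_cons] at he
    rcases he with he | he
    · refine ⟨x, y, Walk.nil, q, he, by simp, ?_, by simp, fun w hw => by simp [hw]⟩
      have : (Walk.cons hadj q).edges.Nodup := hp.isTrail.edges_nodup
      rw [Walk.edges_cons, List.nodup_cons] at this
      exact he ▸ this.1
    · obtain ⟨u, v, p₁, p₂, heq, h1, h2, hs1, hs2⟩ := ih hp.of_cons he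
      refine ⟨u, v, Walk.cons hadj p₁, p₂, heq, ?_, h2,
        ?_, fun w hw => by simp [hs2 w hw]⟩
      · rw [Walk.edges_cons, List.mem_cons]
        rintro (rfl | hmem)
        · have : (Walk.cons hadj q).edges.Nodup := hp.isTrail.edges_nodup
          rw [Walk.edges_cons, List.nodup_cons] at this
          exact this.1 he
        · exact h1 hmem
      · intro w hw
        rw [Walk.support_cons, List.mem_cons] at hw ⊢
        exact hw.imp id (fun h => hs1 w h)


omit [DecidableEq V] in
lemma support_mapLe {G' : SimpleGraph V} (h : G ≤ G') {a b : V} (p : G.Walk a b) :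
    (p.mapLe h).support = p.support := by
  rw [Walk.mapLe, Walk.support_map]
  exact List.map_id _

omit [DecidableEq V] in
lemma isPath_mapLe {G' : SimpleGraph V} (h : G ≤ G') {a b : V} {p : G.Walk a b}
    (hp : p.IsPath) : (p.mapLe h).IsPath := hp.mapLe h

/-- Trivial `ABPath` at a common vertex. -/
def ABPath.triv {A B : Set V} {v : V} (ha : v ∈ A) (hb : v ∈ B) : ABPath G A B where
  first := v
  last := v
  walk := Walk.nil
  isPath := Walk.IsPath.nil
  firstMem := ha
  lastMem := hb
  meetA := by intro x hx _; simpa using hx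
  meetB := by intro x hx _; simpa using hx

lemma menger_no_edges [Fintype V] (G : SimpleGraph V) (A B : Set V) (k : ℕ)
    (hE : G.edgeSet = ∅)
    (hcut : ∀ T : Set V, Cut G A B T → k ≤ T.ncard) :
    ∃ P : Fin k → ABPath G A B,
      ∀ i j, i ≠ j → ∀ x, x ∈ (P i).walk.support → x ∉ (P j).walk.support := by
  classical
  have hAB : Cut G A B (A ∩ B) := by
    intro a ha b hb p
    cases p with
    | nil => exact ⟨a, ⟨ha, hb⟩, Walk.start_mem_support _⟩
    | cons hadj q =>
      exact absurd ((G.mem_edgeSet).mpr hadj) (by simp [hE])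
  have hk : k ≤ (A ∩ B).ncard := hcut _ hAB
  obtain ⟨t, hts, htcard⟩ := Set.exists_subset_card_eq hk
  have htfin : t.Finite := Set.toFinite t
  have hcard : htfin.toFinset.card = k := by
    rw [← htcard, Set.ncard_eq_toFinset_card _ htfin]
  have e : Fin k ≃ htfin.toFinset := (htfin.toFinset.equivFinOfCardEq hcard).symm
  refine ⟨fun i => ABPath.triv (G := G)
      (hts (htfin.mem_toFinset.mp (e i).2)).1 (hts (htfin.mem_toFinset.mp (e i).2)).2, ?_⟩
  intro i j hij x hxi hxj
  simp only [ABPath.triv, Walk.support_nil, List.mem_singleton] at hxi hxj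
  exact hij (e.injective (Subtype.ext (hxi ▸ hxj ▸ rfl)))

/-- Key lifting lemma for cuts in Menger's induction. -/
lemma cut_lift {A B S : Set V} {u v b₀ : V} {e : Sym2 V}
    (he : e = s(u, v))
    (hS : Cut (G.deleteEdges {e}) A B S)
    (hb₀ : b₀ ∈ B)
    (W₂ : (G.deleteEdges {e}).Walk v b₀) (hW₂ : ∀ t ∈ S, t ∉ W₂.support)
    {T : Set V} (hT : Cut (G.deleteEdges {e}) A (insert u S) T) :
    Cut G A B T := by
  intro a ha b hb p
  set P := p.bypass with hP
  have hPp : P.IsPath := p.bypass_isPath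
  have hPsub : ∀ w ∈ P.support, w ∈ p.support := fun w hw => p.support_bypass_subset hw
  by_cases heP : e ∈ P.edges
  · obtain ⟨u', v', p₁, p₂, heq, h1, h2, hs1, hs2⟩ := exists_decomp hPp heP
    let p₁' : (G.deleteEdges {e}).Walk a u' :=
      p₁.toDeleteEdges {e} (by rintro e' he' rfl; exact h1 he')
    have hp₁sup : p₁'.support = p₁.support := Walk.support_transfer p₁ _
    rw [he] at heq
    rcases Sym2.eq_iff.mp heq.symm with ⟨hu', hv'⟩ | ⟨hu', hv'⟩
    · -- u' = u
      obtain ⟨t, ht, hts⟩ := hT ha (hu' ▸ Set.mem_insert u S : u' ∈ insert u S) p₁'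
      exact ⟨t, ht, hPsub _ (hs1 _ (hp₁sup ▸ hts))⟩
    · -- u' = v
      by_cases hmeet : ∃ s₀ ∈ S, s₀ ∈ p₁'.support
      · obtain ⟨s₀, hs₀S, hs₀⟩ := hmeet
        obtain ⟨t, ht, hts⟩ := hT ha (Set.mem_insert_of_mem u hs₀S) (p₁'.takeUntil s₀ hs₀)
        exact ⟨t, ht, hPsub _ (hs1 _ (hp₁sup ▸ (Walk.support_takeUntil_subset _ hs₀ hts)))⟩
      · push_neg at hmeet
        exfalso
        obtain ⟨s₀, hs₀S, hs₀⟩ := hS ha hb₀ ((p₁'.copy rfl hu').append W₂)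
        rw [Walk.mem_support_append_iff] at hs₀
        rcases hs₀ with h | h
        · rw [Walk.support_copy] at h
          exact hmeet s₀ hs₀S h
        · exact hW₂ s₀ hs₀S h
  · let P' : (G.deleteEdges {e}).Walk a b :=
      P.toDeleteEdges {e} (by rintro e' he' rfl; exact heP he')
    have hPsup : P'.support = P.support := Walk.support_transfer P _
    obtain ⟨s₀, hs₀S, hs₀⟩ := hS ha hb P'
    obtain ⟨t, ht, hts⟩ := hT ha (Set.mem_insert_of_mem u hs₀S) (P'.takeUntil s₀ hs₀)
    exact ⟨t, ht, hPsub _ (hPsup ▸ (Walk.support_takeUntil_subset _ hs₀ hts))⟩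

def ABPath.mapLe {G G' : SimpleGraph V} (h : G ≤ G') {A B : Set V} (p : ABPath G A B) :
    ABPath G' A B where
  first := p.first
  last := p.last
  walk := p.walk.mapLe h
  isPath := p.isPath.mapLe h
  firstMem := p.firstMem
  lastMem := p.lastMem
  meetA := fun x hx => p.meetA x (by rwa [support_mapLe] at hx)
  meetB := fun x hx => p.meetB x (by rwa [support_mapLe] at hx)

lemma inj_surj [Fintype V] {k : ℕ} {X : Set V} (hX : X.ncard = k) {g : Fin k → V}
    (hg : Function.Injective g) (hmem : ∀ i, g i ∈ X) : ∀ y ∈ X, ∃ i, g i = y := by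
  classical
  have hF : (Finset.univ.image g).card = k := by
    rw [Finset.card_image_of_injective _ hg, Finset.card_univ, Fintype.card_fin]
  have hsub : Finset.univ.image g ⊆ X.toFinset := by
    intro y hy
    obtain ⟨i, _, rfl⟩ := Finset.mem_image.mp hy
    exact Set.mem_toFinset.mpr (hmem i)
  have hXc : X.toFinset.card = k := by
    rw [← Set.ncard_eq_toFinset_card'] ; exact hX
  have heq : X.toFinset = Finset.univ.image g :=
    (Finset.eq_of_subset_of_card_le hsub (by rw [hF, hXc])).symm
  intro y hy
  have : y ∈ Finset.univ.image g := heq ▸ Set.mem_toFinset.mpr hy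
  obtain ⟨i, _, hi⟩ := Finset.mem_image.mp this
  exact ⟨i, hi⟩

/-- Menger's theorem, set-to-set version, auxiliary induction on edge count. -/
theorem menger_aux [Fintype V] :
    ∀ (n : ℕ) (G : SimpleGraph V) (A B : Set V) (k : ℕ), G.edgeSet.ncard ≤ n →
    (∀ T : Set V, Cut G A B T → k ≤ T.ncard) →
    ∃ P : Fin k → ABPath G A B,
      ∀ i j, i ≠ j → ∀ x, x ∈ (P i).walk.support → x ∉ (P j).walk.support := by
  intro n
  induction n with
  | zero =>
    intro G A B k hn hcut
    have hE : G.edgeSet = ∅ := by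
      rw [← Set.ncard_eq_zero (Set.toFinite _)]; omega
    exact menger_no_edges G A B k hE hcut
  | succ n ih =>
    intro G A B k hn hcut
    by_cases hE : G.edgeSet = ∅
    · exact menger_no_edges G A B k hE hcut
    · obtain ⟨e, he⟩ := Set.nonempty_iff_ne_empty.mpr hE
      set G' := G.deleteEdges {e} with hG'def
      have hle : G' ≤ G := G.deleteEdges_le {e}
      have hG'n : G'.edgeSet.ncard ≤ n := by
        have h1 : G'.edgeSet = G.edgeSet \ {e} := G.edgeSet_deleteEdges {e}
        have h2 : (G.edgeSet \ {e}).ncard + 1 = G.edgeSet.ncard :=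
          Set.ncard_diff_singleton_add_one he (Set.toFinite _)
        rw [h1]; omega
      by_cases hc : ∀ T : Set V, Cut G' A B T → k ≤ T.ncard
      · obtain ⟨P, hP⟩ := ih G' A B k hG'n hc
        refine ⟨fun i => (P i).mapLe hle, ?_⟩
        intro i j hij x hxi hxj
        simp only [ABPath.mapLe, support_mapLe] at hxi hxj
        exact hP i j hij x hxi hxj
      · push_neg at hc
        obtain ⟨S, hScut, hSk⟩ := hc
        -- a walk from A to B in G avoiding S
        have hns : ¬ Cut G A B S := fun h => absurd (hcut S h) (by omega)
        rw [Cut] at hns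
        push_neg at hns
        obtain ⟨a₀, ha₀, b₀, hb₀, W, hW⟩ := hns
        set P₀ := W.bypass with hP₀def
        have hP₀p : P₀.IsPath := W.bypass_isPath
        have hP₀S : ∀ t ∈ S, t ∉ P₀.support :=
          fun t ht hmem => hW t ht (W.support_bypass_subset hmem)
        have heP₀ : e ∈ P₀.edges := by
          by_contra h
          obtain ⟨s₀, hs₀S, hs₀⟩ := hScut ha₀ hb₀
            (P₀.toDeleteEdges {e} (by rintro e' he' rfl; exact h he'))
          rw [Walk.support_transfer] at hs₀
          exact hP₀S s₀ hs₀S hs₀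
        obtain ⟨u, v, W₁g, W₂g, heq, h1, h2, hs1, hs2⟩ := exists_decomp hP₀p heP₀
        have huv : G.Adj u v := by
          rw [← G.mem_edgeSet, ← heq]; exact he
        have hune : u ≠ v := huv.ne
        let W₁ : G'.Walk a₀ u := W₁g.toDeleteEdges {e} (by rintro e' he' rfl; exact h1 he')
        let W₂ : G'.Walk v b₀ := W₂g.toDeleteEdges {e} (by rintro e' he' rfl; exact h2 he')
        have hW₁sup : W₁.support = W₁g.support := Walk.support_transfer _ _
        have hW₂sup : W₂.support = W₂g.support := Walk.support_transfer _ _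
        have hW₁S : ∀ t ∈ S, t ∉ W₁.support := by
          intro t ht hmem
          exact hP₀S t ht (hs1 t (hW₁sup ▸ hmem))
        have hW₂S : ∀ t ∈ S, t ∉ W₂.support := by
          intro t ht hmem
          exact hP₀S t ht (hs2 t (hW₂sup ▸ hmem))
        set Su : Set V := insert u S with hSudef
        set Sv : Set V := insert v S with hSvdef
        have hSuCut : Cut G A B Su := by
          intro a ha b hb p
          by_cases hep : e ∈ p.edges
          · exact ⟨u, Set.mem_insert u S,
              p.fst_mem_support_of_mem_edges (by rwa [← heq])⟩
          · obtain ⟨s₀, hs₀S, hs₀⟩ := hScut ha hb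
              (p.toDeleteEdges {e} (by rintro e' he' rfl; exact hep he'))
            rw [Walk.support_transfer] at hs₀
            exact ⟨s₀, Set.mem_insert_of_mem u hs₀S, hs₀⟩
        have hSvCut : Cut G A B Sv := by
          intro a ha b hb p
          by_cases hep : e ∈ p.edges
          · exact ⟨v, Set.mem_insert v S,
              p.snd_mem_support_of_mem_edges (by rwa [← heq])⟩
          · obtain ⟨s₀, hs₀S, hs₀⟩ := hScut ha hb
              (p.toDeleteEdges {e} (by rintro e' he' rfl; exact hep he'))
            rw [Walk.support_transfer] at hs₀
            exact ⟨s₀, Set.mem_insert_of_mem v hs₀S, hs₀⟩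
        have huS : u ∉ S := by
          intro h
          have h2 : Su = S := Set.insert_eq_of_mem h
          have h3 := hcut Su hSuCut
          rw [h2] at h3; omega
        have hvS : v ∉ S := by
          intro h
          have h2 : Sv = S := Set.insert_eq_of_mem h
          have h3 := hcut Sv hSvCut
          rw [h2] at h3; omega
        have hSucard : Su.ncard = k := by
          have h1 := hcut Su hSuCut
          have h2 : Su.ncard = S.ncard + 1 := Set.ncard_insert_of_notMem huS (Set.toFinite _)
          omega
        have hSvcard : Sv.ncard = k := by
          have h1 := hcut Sv hSvCut
          have h2 : Sv.ncard = S.ncard + 1 := Set.ncard_insert_of_notMem hvS (Set.toFinite _)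
          omega
        have hvSu : v ∉ Su := by
          simp only [hSudef, Set.mem_insert_iff, not_or]
          exact ⟨hune.symm, hvS⟩
        have huSv : u ∉ Sv := by
          simp only [hSvdef, Set.mem_insert_iff, not_or]
          exact ⟨hune, huS⟩
        have hcutA : ∀ T : Set V, Cut G' A Su T → k ≤ T.ncard :=
          fun T hT => hcut T (cut_lift heq hScut hb₀ W₂ hW₂S hT)
        have hcutB : ∀ T : Set V, Cut G' Sv B T → k ≤ T.ncard := by
          intro T hT
          have heq' : e = s(v, u) := heq.trans (Sym2.eq_swap)
          have hW₁rS : ∀ t ∈ S, t ∉ W₁.reverse.support := by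
            intro t ht hmem
            exact hW₁S t ht (by simpa using hmem)
          exact hcut T (cut_lift heq' hScut.symm ha₀ W₁.reverse hW₁rS hT.symm).symm
        obtain ⟨Psys, hPdisj⟩ := ih G' A Su k hG'n hcutA
        obtain ⟨Qsys, hQdisj⟩ := ih G' Sv B k hG'n hcutB
        -- key disjointness facts
        have pair_disj : ∀ (P : ABPath G' A Su) (Q : ABPath G' Sv B) (w : V),
            w ∈ P.walk.support → w ∈ Q.walk.support →
            w ∈ S ∧ w = P.last ∧ w = Q.first := by
          intro P Q w hwP hwQ
          obtain ⟨s₀, hs₀S, hs₀⟩ := hScut P.firstMem Q.lastMem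
            ((P.walk.takeUntil w hwP).append (Q.walk.dropUntil w hwQ))
          rw [Walk.mem_support_append_iff] at hs₀
          rcases hs₀ with h | h
          · have hsP : s₀ ∈ P.walk.support := Walk.support_takeUntil_subset _ _ h
            have hsl : s₀ = P.last := P.meetB s₀ hsP (Set.mem_insert_of_mem u hs₀S)
            have hwl : w = P.last := mem_takeUntil_end P.isPath hwP (hsl ▸ h)
            have hwS : w ∈ S := by rw [hwl, ← hsl]; exact hs₀S
            exact ⟨hwS, hwl, Q.meetA w hwQ (Set.mem_insert_of_mem v hwS)⟩
          · have hsQ : s₀ ∈ Q.walk.support := Walk.support_dropUntil_subset _ _ h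
            have hsf : s₀ = Q.first := Q.meetA s₀ hsQ (Set.mem_insert_of_mem v hs₀S)
            have hwf : w = Q.first := mem_dropUntil_start Q.isPath hwQ (hsf ▸ h)
            have hwS : w ∈ S := by rw [hwf, ← hsf]; exact hs₀S
            exact ⟨hwS, P.meetB w hwP (Set.mem_insert_of_mem u hwS), hwf⟩
        have u_not_Q : ∀ Q : ABPath G' Sv B, u ∉ Q.walk.support := by
          intro Q hu
          obtain ⟨s₀, hs₀S, hs₀⟩ := hScut ha₀ Q.lastMem
            (W₁.append (Q.walk.dropUntil u hu))
          rw [Walk.mem_support_append_iff] at hs₀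
          rcases hs₀ with h | h
          · exact hW₁S s₀ hs₀S h
          · have hsQ : s₀ ∈ Q.walk.support := Walk.support_dropUntil_subset _ _ h
            have hsf : s₀ = Q.first := Q.meetA s₀ hsQ (Set.mem_insert_of_mem v hs₀S)
            have huf : u = Q.first := mem_dropUntil_start Q.isPath hu (hsf ▸ h)
            exact huSv (huf ▸ Q.firstMem)
        have v_not_P : ∀ P : ABPath G' A Su, v ∉ P.walk.support := by
          intro P hv
          obtain ⟨s₀, hs₀S, hs₀⟩ := hScut P.firstMem hb₀
            ((P.walk.takeUntil v hv).append W₂)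
          rw [Walk.mem_support_append_iff] at hs₀
          rcases hs₀ with h | h
          · have hsP : s₀ ∈ P.walk.support := Walk.support_takeUntil_subset _ _ h
            have hsl : s₀ = P.last := P.meetB s₀ hsP (Set.mem_insert_of_mem u hs₀S)
            have hvl : v = P.last := mem_takeUntil_end P.isPath hv (hsl ▸ h)
            exact hvSu (hvl ▸ P.lastMem)
          · exact hW₂S s₀ hs₀S h
        have A_on_Q : ∀ (Q : ABPath G' Sv B) (x : V),
            x ∈ Q.walk.support → x ∈ A → x = Q.first := by
          intro Q x hx hxA
          obtain ⟨s₀, hs₀S, hs₀⟩ := hScut hxA Q.lastMem (Q.walk.dropUntil x hx)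
          have hsQ : s₀ ∈ Q.walk.support := Walk.support_dropUntil_subset _ _ hs₀
          have hsf : s₀ = Q.first := Q.meetA s₀ hsQ (Set.mem_insert_of_mem v hs₀S)
          exact mem_dropUntil_start Q.isPath hx (hsf ▸ hs₀)
        have B_on_P : ∀ (P : ABPath G' A Su) (x : V),
            x ∈ P.walk.support → x ∈ B → x = P.last := by
          intro P x hx hxB
          obtain ⟨s₀, hs₀S, hs₀⟩ := hScut P.firstMem hxB (P.walk.takeUntil x hx)
          have hsP : s₀ ∈ P.walk.support := Walk.support_takeUntil_subset _ _ hs₀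
          have hsl : s₀ = P.last := P.meetB s₀ hsP (Set.mem_insert_of_mem u hs₀S)
          exact mem_takeUntil_end P.isPath hx (hsl ▸ hs₀)
        have huB : u ∉ B := by
          intro h
          obtain ⟨s₀, hs₀S, hs₀⟩ := hScut ha₀ h W₁
          exact hW₁S s₀ hs₀S hs₀
        have hvA : v ∉ A := by
          intro h
          obtain ⟨s₀, hs₀S, hs₀⟩ := hScut h hb₀ W₂
          exact hW₂S s₀ hs₀S hs₀
        -- gluing
        have glue : ∀ (P : ABPath G' A Su) (Q : ABPath G' Sv B),
            ((P.last = u ∧ Q.first = v) ∨ (P.last ∈ S ∧ Q.first = P.last)) →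
            ∃ R : ABPath G A B,
              ∀ w ∈ R.walk.support, w ∈ P.walk.support ∨ w ∈ Q.walk.support := by
          intro P Q hcase
          rcases hcase with ⟨hl, hf⟩ | ⟨hlS, hf⟩
          · -- glue through the edge u-v
            let pg : G.Walk P.first u := (P.walk.copy rfl hl).mapLe hle
            let qg : G.Walk v Q.last := (Q.walk.copy hf rfl).mapLe hle
            have hpgsup : pg.support = P.walk.support := by
              rw [support_mapLe, Walk.support_copy]
            have hqgsup : qg.support = Q.walk.support := by
              rw [support_mapLe, Walk.support_copy]
            have hpgp : pg.IsPath := ((Walk.isPath_copy _ rfl hl).mpr P.isPath).mapLe hle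
            have hqgp : qg.IsPath := ((Walk.isPath_copy _ hf rfl).mpr Q.isPath).mapLe hle
            have hucons : (Walk.cons huv qg).IsPath := by
              rw [Walk.cons_isPath_iff]
              exact ⟨hqgp, fun h => u_not_Q Q (hqgsup ▸ h)⟩
            have hRp : (pg.append (Walk.cons huv qg)).IsPath := by
              apply append_isPath hpgp hucons
              intro w hwp hwc
              rw [Walk.support_cons, List.mem_cons] at hwc
              rcases hwc with rfl | hwq
              · rfl
              · exfalso
                obtain ⟨hwS, _, hwf⟩ := pair_disj P Q w (hpgsup ▸ hwp) (hqgsup ▸ hwq)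
                rw [hwf, hf] at hwS
                exact hvS hwS
            refine ⟨⟨P.first, Q.last, pg.append (Walk.cons huv qg), hRp,
              P.firstMem, Q.lastMem, ?_, ?_⟩, ?_⟩
            · intro x hx hxA
              rw [Walk.mem_support_append_iff] at hx
              rcases hx with hx | hx
              · exact P.meetA x (hpgsup ▸ hx) hxA
              · rw [Walk.support_cons, List.mem_cons] at hx
                rcases hx with rfl | hx
                · exact P.meetA x (hl ▸ Walk.end_mem_support P.walk) hxA
                · exfalso
                  have := A_on_Q Q x (hqgsup ▸ hx) hxA
                  rw [this, hf] at hxA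
                  exact hvA hxA
            · intro x hx hxB
              rw [Walk.mem_support_append_iff] at hx
              rcases hx with hx | hx
              · exfalso
                have := B_on_P P x (hpgsup ▸ hx) hxB
                rw [this, hl] at hxB
                exact huB hxB
              · rw [Walk.support_cons, List.mem_cons] at hx
                rcases hx with rfl | hx
                · exact absurd hxB huB
                · exact Q.meetB x (hqgsup ▸ hx) hxB
            · intro w hw
              simp only [Walk.mem_support_append_iff, Walk.support_cons,
                List.mem_cons] at hw
              rcases hw with hw | rfl | hw
              · exact Or.inl (hpgsup ▸ hw)
              · exact Or.inl (hl ▸ Walk.end_mem_support P.walk)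
              · exact Or.inr (hqgsup ▸ hw)
          · -- glue at the common vertex P.last ∈ S
            let pg : G.Walk P.first P.last := P.walk.mapLe hle
            let qg : G.Walk P.last Q.last := (Q.walk.copy hf rfl).mapLe hle
            have hpgsup : pg.support = P.walk.support := support_mapLe _ _
            have hqgsup : qg.support = Q.walk.support := by
              rw [support_mapLe, Walk.support_copy]
            have hpgp : pg.IsPath := P.isPath.mapLe hle
            have hqgp : qg.IsPath := ((Walk.isPath_copy _ hf rfl).mpr Q.isPath).mapLe hle
            have hRp : (pg.append qg).IsPath := by
              apply append_isPath hpgp hqgp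
              intro w hwp hwq
              exact (pair_disj P Q w (hpgsup ▸ hwp) (hqgsup ▸ hwq)).2.1
            refine ⟨⟨P.first, Q.last, pg.append qg, hRp,
              P.firstMem, Q.lastMem, ?_, ?_⟩, ?_⟩
            · intro x hx hxA
              rw [Walk.mem_support_append_iff] at hx
              rcases hx with hx | hx
              · exact P.meetA x (hpgsup ▸ hx) hxA
              · have hxf : x = Q.first := A_on_Q Q x (hqgsup ▸ hx) hxA
                have hxl : x = P.last := hxf.trans hf
                have : P.last = P.first :=
                  P.meetA P.last (Walk.end_mem_support P.walk) (hxl ▸ hxA)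
                rw [hxl, this]
            · intro x hx hxB
              rw [Walk.mem_support_append_iff] at hx
              rcases hx with hx | hx
              · have hxl : x = P.last := B_on_P P x (hpgsup ▸ hx) hxB
                have hxf : x = Q.first := hxl.trans hf.symm
                have : Q.first = Q.last :=
                  Q.meetB Q.first (Walk.start_mem_support Q.walk) (hxf ▸ hxB)
                rw [hxf, this]
              · exact Q.meetB x (hqgsup ▸ hx) hxB
            · intro w hw
              rw [Walk.mem_support_append_iff] at hw
              rcases hw with hw | hw
              · exact Or.inl (hpgsup ▸ hw)
              · exact Or.inr (hqgsup ▸ hw)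
        -- matching
        have hPlast_inj : Function.Injective (fun i => (Psys i).last) := by
          intro i j h
          by_contra hij
          exact hPdisj i j hij (Psys i).last (Walk.end_mem_support _)
            (by rw [show (Psys i).last = (Psys j).last from h];
                exact Walk.end_mem_support _)
        have hQfirst_inj : Function.Injective (fun i => (Qsys i).first) := by
          intro i j h
          by_contra hij
          exact hQdisj i j hij (Qsys i).first (Walk.start_mem_support _)
            (by rw [show (Qsys i).first = (Qsys j).first from h];
                exact Walk.start_mem_support _)
        have hQsurj := inj_surj hSvcard hQfirst_inj (fun i => (Qsys i).firstMem)
        set τ : Fin k → V := fun i => if (Psys i).last = u then v else (Psys i).last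
          with hτdef
        have hτSv : ∀ i, τ i ∈ Sv := by
          intro i
          simp only [hτdef]
          by_cases h : (Psys i).last = u
          · simp only [h, if_pos]
            exact Set.mem_insert v S
          · simp only [h, if_neg, ite_false]
            have := (Psys i).lastMem
            simp only [hSudef, Set.mem_insert_iff] at this
            rcases this with h' | h'
            · exact absurd h' h
            · exact Set.mem_insert_of_mem v h'
        have hchoice : ∀ i, ∃ j, (Qsys j).first = τ i := fun i => hQsurj (τ i) (hτSv i)
        choose σ hσ using hchoice
        have hτ_inj : Function.Injective τ := by
          intro i j h
          simp only [hτdef] at h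
          by_cases hi : (Psys i).last = u <;> by_cases hj : (Psys j).last = u
          · exact hPlast_inj (hi.trans hj.symm)
          · simp only [hi, hj, if_pos, if_neg, ite_true, ite_false] at h
            exfalso
            have := (Psys j).lastMem
            rw [← h] at this
            exact hvSu this
          · simp only [hi, hj, if_pos, if_neg, ite_true, ite_false] at h
            exfalso
            have := (Psys i).lastMem
            rw [h] at this
            exact hvSu this
          · simp only [hi, hj, if_neg, ite_false] at h
            exact hPlast_inj h
        have hσ_inj : Function.Injective σ := by
          intro i j h
          apply hτ_inj
          rw [← hσ i, ← hσ j, h]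
        have hglue_cond : ∀ i, ((Psys i).last = u ∧ (Qsys (σ i)).first = v) ∨
            ((Psys i).last ∈ S ∧ (Qsys (σ i)).first = (Psys i).last) := by
          intro i
          by_cases h : (Psys i).last = u
          · left
            refine ⟨h, ?_⟩
            rw [hσ i]; simp only [hτdef]
            simp [h]
          · right
            constructor
            · have := (Psys i).lastMem
              simp only [hSudef, Set.mem_insert_iff] at this
              rcases this with h' | h'
              · exact absurd h' h
              · exact h'
            · rw [hσ i]; simp only [hτdef]; simp [h]
        choose R hR using fun i => glue (Psys i) (Qsys (σ i)) (hglue_cond i)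
        refine ⟨R, ?_⟩
        intro i j hij x hxi hxj
        rcases hR i x hxi with hxPi | hxQi <;> rcases hR j x hxj with hxPj | hxQj
        · exact hPdisj i j hij x hxPi hxPj
        · obtain ⟨hxS, hxl, hxf⟩ := pair_disj (Psys i) (Qsys (σ j)) x hxPi hxQj
          rw [hσ j] at hxf; simp only [hτdef] at hxf
          by_cases h : (Psys j).last = u
          · simp only [h, if_pos, ite_true] at hxf
            rw [hxf] at hxS
            exact hvS hxS
          · simp only [h, if_neg, ite_false] at hxf
            exact hij (hPlast_inj (hxl.symm.trans hxf))
        · obtain ⟨hxS, hxl, hxf⟩ := pair_disj (Psys j) (Qsys (σ i)) x hxPj hxQi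
          rw [hσ i] at hxf; simp only [hτdef] at hxf
          by_cases h : (Psys i).last = u
          · simp only [h, if_pos, ite_true] at hxf
            rw [hxf] at hxS
            exact hvS hxS
          · simp only [h, if_neg, ite_false] at hxf
            exact hij (hPlast_inj (hxf.symm.trans hxl))
        · exact hQdisj (σ i) (σ j) (fun h => hij (hσ_inj h)) x hxQi hxQj

/-- Menger's theorem, set-to-set version. -/
theorem menger [Fintype V] (G : SimpleGraph V) (A B : Set V) (k : ℕ)
    (hcut : ∀ T : Set V, Cut G A B T → k ≤ T.ncard) :
    ∃ P : Fin k → ABPath G A B,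
      ∀ i j, i ≠ j → ∀ x, x ∈ (P i).walk.support → x ∉ (P j).walk.support :=
  menger_aux G.edgeSet.ncard G A B k le_rfl hcut

/-- Lift a walk whose support lies in `s` to the induced subgraph on `s`. -/
lemma exists_lift_walk {G : SimpleGraph V} {s : Set V} :
    ∀ {a b : V} (p : G.Walk a b) (_ : ∀ x ∈ p.support, x ∈ s) (ha : a ∈ s) (hb : b ∈ s),
    ∃ q : (G.induce s).Walk ⟨a, ha⟩ ⟨b, hb⟩, ∀ y ∈ q.support, (y : V) ∈ p.support := by
  intro a b p
  induction p with
  | nil =>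
    intro h ha hb
    exact ⟨Walk.nil.copy rfl (by congr), by simp [Walk.support_copy]⟩
  | cons hadj q ih =>
    rename_i x y z
    intro h ha hb
    have hy : y ∈ s := h y (by simp)
    obtain ⟨q', hq'⟩ := ih (fun w hw => h w (by simp [hw])) hy hb
    refine ⟨Walk.cons (by simpa using hadj) q', ?_⟩
    intro w hw
    rw [Walk.support_cons, List.mem_cons] at hw
    rcases hw with rfl | hw
    · simp
    · simp [hq' w hw]

end MengerAux



open MengerAux in
theorem stmt15 {V : Type*} [Fintype V] (G : SimpleGraph V) (k : ℕ) :
    IsKConnected G k ↔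
      (k + 1 ≤ Fintype.card V ∧
        ∀ (x : V) (U : Finset V), k ≤ U.card → x ∉ U →
          ∃ (t : Fin k → V) (P : ∀ i, G.Walk x (t i)), IsFan G x (↑U) k t P) := by
  classical
  constructor
  · rintro ⟨hcard, hconn⟩
    refine ⟨hcard, ?_⟩
    intro x U hU hxU
    set s : Set V := {x}ᶜ with hsdef
    haveI : Fintype ↥s := Fintype.ofFinite _
    set H : SimpleGraph ↥s := G.induce s with hHdef
    set A : Set ↥s := {y | G.Adj x ↑y} with hAdef
    set B : Set ↥s := {y | (↑y : V) ∈ U} with hBdef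
    have hcut : ∀ T : Set ↥s, Cut H A B T → k ≤ T.ncard := by
      intro T hT
      by_contra hlt
      push_neg at hlt
      set T' : Set V := Subtype.val '' T with hT'def
      have hT'card : T'.ncard = T.ncard := Set.ncard_image_of_injective T Subtype.val_injective
      set Tfin : Finset V := (Set.toFinite T').toFinset with hTfindef
      have hTfincard : Tfin.card < k := by
        rw [hTfindef, ← Set.ncard_eq_toFinset_card T' (Set.toFinite T'), hT'card]
        exact hlt
      have hxT' : x ∉ T' := by
        rintro ⟨y, _, hy⟩
        exact y.2 (by simp [hy])
      have hconn' := hconn Tfin hTfincard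
      have hmemTfin : ∀ w : V, w ∈ Tfin ↔ w ∈ T' := by
        intro w
        rw [hTfindef, Set.Finite.mem_toFinset]
      have hcompl : ∀ w : V, w ∉ T' → w ∈ ((↑Tfin : Set V)ᶜ) := by
        intro w hw
        rw [Set.mem_compl_iff, Finset.mem_coe]
        exact fun h => hw ((hmemTfin w).mp h)
      -- pick u₀ ∈ U \ Tfin
      have hU0 : (U \ Tfin).Nonempty := by
        rw [Finset.sdiff_nonempty]
        intro hsub
        have := Finset.card_le_card hsub
        omega
      obtain ⟨u₀, hu₀⟩ := hU0
      rw [Finset.mem_sdiff] at hu₀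
      have hu₀T' : u₀ ∉ T' := fun h => hu₀.2 ((hmemTfin u₀).mpr h)
      have hreach := hconn'.preconnected ⟨x, hcompl x hxT'⟩ ⟨u₀, hcompl u₀ hu₀T'⟩
      obtain ⟨w⟩ := hreach
      let homc : (G.induce ((↑Tfin : Set V)ᶜ)) →g G := ⟨Subtype.val, fun {c d} h => by simpa using h⟩
      let wg : G.Walk x u₀ := w.map homc
      have hwgsup : ∀ y ∈ wg.support, y ∉ T' := by
        intro y hy
        rw [show wg = w.map homc from rfl, Walk.support_map] at hy
        obtain ⟨c, hc, rfl⟩ := List.mem_map.mp hy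
        intro hmem
        have := c.2
        rw [Set.mem_compl_iff, Finset.mem_coe] at this
        exact this ((hmemTfin _).mpr hmem)
      set p := wg.bypass with hpdef
      have hpp : p.IsPath := wg.bypass_isPath
      have hpsup : ∀ y ∈ p.support, y ∉ T' := fun y hy => hwgsup y (wg.support_bypass_subset hy)
      have hxu₀ : x ≠ u₀ := fun h => hxU (h ▸ hu₀.1)
      obtain ⟨y₁, hadj, q, hq⟩ := Walk.exists_eq_cons_of_ne hxu₀ p
      have hqp : q.IsPath ∧ x ∉ q.support := by
        have := hpp
        rw [hq, Walk.cons_isPath_iff] at this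
        exact this
      have hqsub : ∀ y ∈ q.support, y ∈ p.support := by
        intro y hy
        rw [hq, Walk.support_cons]
        exact List.mem_cons_of_mem _ hy
      have hqs : ∀ y ∈ q.support, y ∈ s := by
        intro y hy
        rw [hsdef, Set.mem_compl_iff, Set.mem_singleton_iff]
        rintro rfl
        exact hqp.2 hy
      have hy₁s : y₁ ∈ s := hqs y₁ (Walk.start_mem_support q)
      have hu₀s : u₀ ∈ s := hqs u₀ (Walk.end_mem_support q)
      obtain ⟨q', hq'⟩ := exists_lift_walk q hqs hy₁s hu₀s
      obtain ⟨t, htT, hts⟩ := hT (show (⟨y₁, hy₁s⟩ : ↥s) ∈ A from hadj)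
        (show (⟨u₀, hu₀s⟩ : ↥s) ∈ B from hu₀.1) q'
      exact hpsup (↑t) (hqsub _ (hq' t hts)) ⟨t, htT, rfl⟩
    obtain ⟨P, hP⟩ := menger H A B k hcut
    let hom : H →g G := ⟨Subtype.val, fun {c d} h => by simpa [hHdef] using h⟩
    have hadj : ∀ i, G.Adj x ↑(P i).first := fun i => (P i).firstMem
    refine ⟨fun i => ↑(P i).last, fun i => Walk.cons (hadj i) ((P i).walk.map hom), ?_, ?_, ?_, ?_⟩
    · intro i
      exact (P i).lastMem
    · intro i
      rw [Walk.cons_isPath_iff]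
      constructor
      · exact Walk.map_isPath_of_injective Subtype.val_injective (P i).isPath
      · rw [Walk.support_map]
        rintro hmem
        obtain ⟨c, _, hc⟩ := List.mem_map.mp hmem
        exact c.2 (by simp only [Set.mem_singleton_iff]; exact hc)
    · intro i w hw hwU
      rw [Walk.support_cons, List.mem_cons] at hw
      rcases hw with rfl | hw
      · exact absurd hwU hxU
      · rw [Walk.support_map] at hw
        obtain ⟨c, hc, rfl⟩ := List.mem_map.mp hw
        exact congrArg Subtype.val ((P i).meetB c hc hwU)
    · intro i j hij w hwi hwj
      rw [Walk.support_cons, List.mem_cons] at hwi hwj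
      rcases hwi with rfl | hwi
      · rfl
      · rcases hwj with rfl | hwj
        · rfl
        · exfalso
          rw [Walk.support_map] at hwi hwj
          obtain ⟨c, hc, rfl⟩ := List.mem_map.mp hwi
          obtain ⟨d, hd, hdc⟩ := List.mem_map.mp hwj
          have : d = c := Subtype.val_injective hdc
          exact hP i j hij c hc (this ▸ hd)
  · rintro ⟨hcard, hfan⟩
    refine ⟨by omega, ?_⟩
    intro Wf hWf
    rw [connected_iff]
    have hex : ∃ a : V, a ∉ Wf := by
      by_contra h
      push_neg at h
      have : Finset.univ ⊆ Wf := fun a _ => h a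
      have := Finset.card_le_card this
      rw [Finset.card_univ] at this
      omega
    constructor
    · intro ⟨a, ha⟩ ⟨b, hb⟩
      rw [Set.mem_compl_iff, Finset.mem_coe] at ha hb
      by_cases hab : a = b
      · subst hab
        rfl
      · -- build U
        have hbB : b ∈ insert b Wf := Finset.mem_insert_self b Wf
        have hsub : insert b Wf ⊆ Finset.univ.erase a := by
          intro c hc
          rw [Finset.mem_erase]
          rcases Finset.mem_insert.mp hc with rfl | hc
          · exact ⟨fun h => hab h.symm, Finset.mem_univ c⟩
          · exact ⟨fun h => ha (h ▸ hc), Finset.mem_univ c⟩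
        have hcards : (insert b Wf).card ≤ k := by
          have := Finset.card_insert_le b Wf
          omega
        have hbig : (k - (insert b Wf).card) + (insert b Wf).card ≤ (Finset.univ.erase a).card := by
          rw [Finset.card_erase_of_mem (Finset.mem_univ a), Finset.card_univ]
          omega
        obtain ⟨U, hUsub, hUsub2, hUcard⟩ :=
          Finset.exists_subsuperset_card_eq hsub (Nat.le_add_left _ _) hbig
        have hUk : U.card = k := by
          rw [hUcard]; omega
        have haU : a ∉ U := fun h => (Finset.mem_erase.mp (hUsub2 h)).1 rfl
        obtain ⟨t, P, hmem, hpath, hmeet, hpair⟩ := hfan a U (le_of_eq hUk.symm) haU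
        have htinj : Function.Injective t := by
          intro i j hij
          by_contra hne
          have h1 : t i ∈ (P i).support := by
            have := Walk.end_mem_support (P i); exact this
          have h2 : t i ∈ (P j).support := by
            rw [hij]; exact Walk.end_mem_support (P j)
          have := hpair i j hne (t i) h1 h2
          exact haU (this ▸ hmem i)
        have hsurj := inj_surj (X := (↑U : Set V)) (by rw [Set.ncard_coe_finset]; exact hUk)
          htinj hmem
        obtain ⟨i, hi⟩ := hsurj b (hUsub hbB)
        have hPsup : ∀ y ∈ (P i).support, y ∈ ((↑Wf : Set V)ᶜ) := by
          intro y hy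
          rw [Set.mem_compl_iff, Finset.mem_coe]
          intro hyW
          have hyU : y ∈ (↑U : Set V) := hUsub (Finset.mem_insert_of_mem hyW)
          have := hmeet i y hy hyU
          rw [this, hi] at hyW
          exact hb hyW
        obtain ⟨q, _⟩ := exists_lift_walk (P i) hPsup
          (hPsup a (Walk.start_mem_support _)) (hPsup (t i) (Walk.end_mem_support _))
        have : (⟨t i, hPsup (t i) (Walk.end_mem_support _)⟩ : ↥((↑Wf : Set V)ᶜ))
            = ⟨b, hb⟩ := Subtype.ext hi
        exact this ▸ q.reachable
    · exact ⟨⟨hex.choose, by simpa using hex.choose_spec⟩⟩
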